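/- Let X be a Tychonoff (completely regular Hausdorff) space, let βX be its Stone–Čech compactification (with X identified with its image), and let υX = ⋂{C : C is a cozero-set of βX containing X}. Let 𝓤_X be the ideal in X generated by the open subsets of X whose closures are pseudocompact. Then X is connected modulo 𝓤_X if and only if cl_{βX}(βX \ υX) is preconnected (i.e., it cannot be written as the union of two nonempty separated subsets). -/

import Mathlib

open Set Topology

/-- An ideal in a set `X`: a nonempty collection of subsets of `X`, downward closed
and closed under finite unions. -/
def IsSetIdeal {X : Type*} (H : Set (Set X)) : Prop :=
  H.Nonempty ∧ (∀ A B : Set X, A ⊆ B → B ∈ H → A ∈ H) ∧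
    (∀ A B : Set X, A ∈ H → B ∈ H → A ∪ B ∈ H)

/-- A continuous map `f : X → [0,1]` is 2-valued modulo an ideal `H` if `f⁻¹(0) ∉ H`,
`f⁻¹(1) ∉ H`, and `X \ (f⁻¹(0) ∪ f⁻¹(1)) ∈ H`. -/
def TwoValuedMod {X : Type*} [TopologicalSpace X] (H : Set (Set X)) (f : X → ℝ) : Prop :=
  Continuous f ∧ (∀ x, f x ∈ Set.Icc (0 : ℝ) 1) ∧
    f ⁻¹' {0} ∉ H ∧ f ⁻¹' {1} ∉ H ∧ (f ⁻¹' {0} ∪ f ⁻¹' {1})ᶜ ∈ H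

/-- `X` is connected modulo the ideal `H` if there is no continuous `f : X → [0,1]`
that is 2-valued modulo `H`. -/
def ConnectedMod (X : Type*) [TopologicalSpace X] (H : Set (Set X)) : Prop :=
  ¬ ∃ f : X → ℝ, TwoValuedMod H f

/-- The ideal generated by a collection `𝓐` of subsets of `X`: all subsets of finite
unions of members of `𝓐`. -/
def GenIdeal {X : Type*} (𝓐 : Set (Set X)) : Set (Set X) :=
  {S | ∃ 𝓑 : Set (Set X), 𝓑 ⊆ 𝓐 ∧ 𝓑.Finite ∧ S ⊆ ⋃₀ 𝓑}

/-- A subset `S` of `X` is pseudocompact if every continuous real-valued function on the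
subspace `S` is bounded. -/
def IsPseudocompactSet {X : Type*} [TopologicalSpace X] (S : Set X) : Prop :=
  ∀ f : ↥S → ℝ, Continuous f → ∃ M : ℝ, ∀ y : ↥S, |f y| ≤ M

/-- The Hewitt realcompactification `υX` of `X` inside `βX`: the intersection of all
cozero-sets of `βX` containing the image of `X`. -/
def upsilonSet (X : Type*) [TopologicalSpace X] : Set (StoneCech X) :=
  ⋂₀ {C : Set (StoneCech X) |
    (∃ g : StoneCech X → ℝ, Continuous g ∧ C = {p | g p ≠ 0}) ∧
      Set.range (stoneCechUnit : X → StoneCech X) ⊆ C}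

section Aux

open Filter Function unitInterval

variable {X : Type*} [TopologicalSpace X]

private lemma aux_inv_le_inv {a b : ℝ} (ha : 0 < a) (hab : a ≤ b) : b⁻¹ ≤ a⁻¹ := by
  rw [← one_div, ← one_div]
  exact one_div_le_one_div_of_le ha hab

private lemma aux_inv_lt_inv {a b : ℝ} (ha : 0 < a) (hab : a < b) : b⁻¹ < a⁻¹ := by
  rw [← one_div, ← one_div]
  exact one_div_lt_one_div_of_lt ha hab

private lemma subtype_open_aux {T : Set X} {s : Set ↥T} (hs : IsOpen s) :
    ∃ V : Set X, IsOpen V ∧ Subtype.val ⁻¹' V = s := by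
  rwa [isOpen_induced_iff] at hs

/-- The closure in `βX` of the image of a pseudocompact subset of `X` is contained in `υX`. -/
lemma pseudo_image_closure_subset_upsilon {A : Set X} (hA : IsPseudocompactSet A) :
    closure (stoneCechUnit '' A) ⊆ upsilonSet X := by
  intro p hp
  rw [upsilonSet, mem_sInter]
  rintro C ⟨⟨g, hg, rfl⟩, hr⟩
  have hne : ∀ a : ↥A, g (stoneCechUnit (a : X)) ≠ 0 := fun a => hr ⟨(a : X), rfl⟩
  have hφc : Continuous fun a : ↥A => (g (stoneCechUnit (a : X)))⁻¹ :=
    Continuous.inv₀ (hg.comp (continuous_stoneCechUnit.comp continuous_subtype_val)) hne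
  obtain ⟨M, hM⟩ := hA _ hφc
  set M' : ℝ := max M 1 with hM'def
  have hbound : ∀ a : ↥A, 1 ≤ M' * |g (stoneCechUnit (a : X))| := by
    intro a
    have h2 : (g (stoneCechUnit (a : X)))⁻¹ * g (stoneCechUnit (a : X)) = 1 :=
      inv_mul_cancel₀ (hne a)
    calc (1 : ℝ) = |(g (stoneCechUnit (a : X)))⁻¹| * |g (stoneCechUnit (a : X))| := by
          rw [← abs_mul, h2, abs_one]
      _ ≤ M' * |g (stoneCechUnit (a : X))| :=
          mul_le_mul_of_nonneg_right ((hM a).trans (le_max_left _ _)) (abs_nonneg _)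
  have hD : closure (stoneCechUnit '' A) ⊆ {q : StoneCech X | 1 ≤ M' * |g q|} := by
    apply closure_minimal
    · rintro _ ⟨a, ha, rfl⟩
      exact hbound ⟨a, ha⟩
    · exact isClosed_le continuous_const (continuous_const.mul hg.abs)
  have hDp := hD hp
  intro h0
  rw [mem_setOf_eq, h0, abs_zero, mul_zero] at hDp
  linarith

/-- The closure in `βX` of the image of a member of the ideal `𝓤_X` is contained in `υX`. -/
lemma ideal_closure_subset_upsilon {S : Set X}
    (hS : S ∈ GenIdeal {U : Set X | IsOpen U ∧ IsPseudocompactSet (closure U)}) :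
    closure (stoneCechUnit '' S) ⊆ upsilonSet X := by
  obtain ⟨𝓑, h𝓑, hfin, hsub⟩ := hS
  have hclosed : IsClosed (⋃ U ∈ 𝓑, closure (stoneCechUnit '' closure U)) :=
    hfin.isClosed_biUnion fun U _ => isClosed_closure
  have himg : stoneCechUnit '' S ⊆ ⋃ U ∈ 𝓑, closure (stoneCechUnit '' closure U) := by
    rintro _ ⟨x, hx, rfl⟩
    obtain ⟨U, hU, hxU⟩ := hsub hx
    exact mem_biUnion hU (subset_closure (mem_image_of_mem _ (subset_closure hxU)))
  refine (closure_minimal himg hclosed).trans ?_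
  intro p hp
  simp only [mem_iUnion, exists_prop] at hp
  obtain ⟨U, hU, hpU⟩ := hp
  exact pseudo_image_closure_subset_upsilon (h𝓑 hU).2 hpU

lemma open_subset_closure_image_preimage {O : Set (StoneCech X)} (hO : IsOpen O) :
    O ⊆ closure (stoneCechUnit '' (stoneCechUnit ⁻¹' O)) := by
  rw [Set.image_preimage_eq_inter_range]
  exact (denseRange_stoneCechUnit (α := X)).open_subset_closure_inter hO

/-- Key lemma: if `W ⊆ X` is open and the closure in `βX` of its image is contained in
`υX`, then `cl_X W` is pseudocompact. -/
lemma pseudocompact_of_closure_image_subset_upsilon [T35Space X] {W : Set X} (hWo : IsOpen W)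
    (hcl : closure (stoneCechUnit '' W) ⊆ upsilonSet X) :
    IsPseudocompactSet (closure W) := by
  classical
  intro φ hφ
  by_contra hub
  push_neg at hub
  set q : ↥(closure W) → ℝ := fun y => |φ y| with hqdef
  have hqc : Continuous q := hφ.abs
  set v : X → ℝ := fun x => if hx : x ∈ closure W then q ⟨x, hx⟩ else 0 with hvdef
  have hvW : ∀ (x : X) (hx : x ∈ closure W), v x = q ⟨x, hx⟩ := fun x hx => dif_pos hx
  have key : ∀ M : ℝ, ∃ x ∈ W, M < v x := by
    intro M
    obtain ⟨y, hy⟩ := hub M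
    obtain ⟨V, hVo, hVeq⟩ := subtype_open_aux (hqc.isOpen_preimage _ (isOpen_Ioi (a := M)))
    have hyV : (y : X) ∈ V := by
      have hmem : y ∈ Subtype.val ⁻¹' V := by rw [hVeq]; exact hy
      exact hmem
    obtain ⟨x, hxV, hxW⟩ := mem_closure_iff.mp y.2 V hVo hyV
    refine ⟨x, hxW, ?_⟩
    have hxT : x ∈ closure W := subset_closure hxW
    have hmem : (⟨x, hxT⟩ : ↥(closure W)) ∈ Subtype.val ⁻¹' V := hxV
    rw [hVeq] at hmem
    rw [hvW x hxT]
    exact hmem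
  choose next hnextW hnextv using fun x : X => key (v x + 3)
  obtain ⟨x0, hx0W, hx0v⟩ := key 0
  set seq : ℕ → X := fun n => next^[n] x0 with hseqdef
  have hseqW : ∀ n, seq n ∈ W := by
    intro n
    induction n with
    | zero => exact hx0W
    | succ n ih =>
      have h1 : seq (n + 1) = next (seq n) := Function.iterate_succ_apply' _ _ _
      rw [h1]; exact hnextW _
  have hgap : ∀ n, v (seq n) + 3 < v (seq (n + 1)) := by
    intro n
    have h1 : seq (n + 1) = next (seq n) := Function.iterate_succ_apply' _ _ _
    rw [h1]; exact hnextv (seq n)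
  have hlin : ∀ n : ℕ, v x0 + 3 * (n : ℝ) ≤ v (seq n) := by
    intro n
    induction n with
    | zero =>
      have h0 : seq 0 = x0 := rfl
      rw [h0]; norm_num
    | succ n ih =>
      have := hgap n
      push_cast
      push_cast at ih
      linarith
  have hΩex : ∀ n : ℕ, ∃ V : Set X, IsOpen V ∧
      Subtype.val ⁻¹' V = q ⁻¹' Ioo (v (seq n) - 1) (v (seq n) + 1) :=
    fun _ => subtype_open_aux (hqc.isOpen_preimage _ isOpen_Ioo)
  choose U hUo hUeq using hΩex
  set Ω : ℕ → Set X := fun n => W ∩ U n with hΩdef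
  have hΩo : ∀ n, IsOpen (Ω n) := fun n => hWo.inter (hUo n)
  have hΩq : ∀ (n : ℕ) (x : X) (hx : x ∈ Ω n),
      q ⟨x, subset_closure hx.1⟩ ∈ Ioo (v (seq n) - 1) (v (seq n) + 1) := by
    intro n x hx
    have hmem : (⟨x, subset_closure hx.1⟩ : ↥(closure W)) ∈ Subtype.val ⁻¹' U n := hx.2
    rw [hUeq] at hmem
    exact hmem
  have hseqΩ : ∀ n, seq n ∈ Ω n := by
    intro n
    refine ⟨hseqW n, ?_⟩
    have hT : seq n ∈ closure W := subset_closure (hseqW n)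
    have hmem : (⟨seq n, hT⟩ : ↥(closure W)) ∈
        q ⁻¹' Ioo (v (seq n) - 1) (v (seq n) + 1) := by
      have hq : q ⟨seq n, hT⟩ = v (seq n) := (hvW _ hT).symm
      constructor <;> rw [hq] <;> linarith
    rw [← hUeq] at hmem
    exact hmem
  have hlf : LocallyFinite Ω := by
    intro y
    by_cases hyT : y ∈ closure W
    · obtain ⟨V, hVo, hVeq⟩ := subtype_open_aux
        (hqc.isOpen_preimage _ (isOpen_Ioo (a := q ⟨y, hyT⟩ - 1) (b := q ⟨y, hyT⟩ + 1)))
      have hyV : y ∈ V := by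
        have hmem : (⟨y, hyT⟩ : ↥(closure W)) ∈ Subtype.val ⁻¹' V := by
          rw [hVeq]
          exact ⟨by linarith, by linarith⟩
        exact hmem
      refine ⟨V, hVo.mem_nhds hyV, ?_⟩
      refine Set.Finite.subset (Set.finite_lt_nat (Nat.ceil ((q ⟨y, hyT⟩ + 2 - v x0) / 3)))
        ?_
      rintro n ⟨z, hzΩ, hzV⟩
      have hzT : z ∈ closure W := subset_closure hzΩ.1
      have h1 := hΩq n z hzΩ
      have h2 : q ⟨z, hzT⟩ ∈ Ioo (q ⟨y, hyT⟩ - 1) (q ⟨y, hyT⟩ + 1) := by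
        have hmem : (⟨z, hzT⟩ : ↥(closure W)) ∈ Subtype.val ⁻¹' V := hzV
        rw [hVeq] at hmem
        exact hmem
      have h3 := hlin n
      rw [mem_setOf_eq, Nat.lt_ceil]
      have h11 := h1.1
      have h22 := h2.2
      linarith
    · refine ⟨(closure W)ᶜ, isClosed_closure.isOpen_compl.mem_nhds hyT, ?_⟩
      have hemp : {n : ℕ | (Ω n ∩ (closure W)ᶜ).Nonempty} = ∅ := by
        rw [Set.eq_empty_iff_forall_notMem]
        rintro n ⟨z, hz1, hz2⟩
        exact hz2 (subset_closure hz1.1)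
      rw [hemp]
      exact finite_empty
  have hcr : ∀ n : ℕ, ∃ g : X → I, Continuous g ∧ g (seq n) = 0 ∧ EqOn g 1 (Ω n)ᶜ :=
    fun n => CompletelyRegularSpace.completely_regular (seq n) (Ω n)ᶜ
      (hΩo n).isClosed_compl (fun h => h (hseqΩ n))
  choose g hgc hg0 hg1 using hcr
  set u : ℕ → X → ℝ := fun n x => ((n : ℝ) + 1) * (1 - (g n x : ℝ)) with hudef
  have huc : ∀ n, Continuous (u n) :=
    fun n => continuous_const.mul (continuous_const.sub (continuous_subtype_val.comp (hgc n)))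
  have husupp : ∀ n, Function.support (u n) ⊆ Ω n := by
    intro n x hx
    by_contra hxn
    apply hx
    have h1 : g n x = 1 := hg1 n hxn
    simp only [hudef, h1]
    norm_num
  have hunn : ∀ n x, 0 ≤ u n x := by
    intro n x
    have h1 : (g n x : ℝ) ≤ 1 := (g n x).2.2
    have h2 : (0 : ℝ) ≤ (n : ℝ) + 1 := by positivity
    have h3 : (0 : ℝ) ≤ 1 - (g n x : ℝ) := by linarith
    exact mul_nonneg h2 h3
  set s : X → ℝ := fun x => ∑ᶠ n, u n x with hsdef
  have hsc : Continuous s := continuous_finsum huc (hlf.subset husupp)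
  have hsnn : ∀ x, 0 ≤ s x := fun x => finsum_nonneg fun n => hunn n x
  have hsbig : ∀ n : ℕ, (n : ℝ) + 1 ≤ s (seq n) := by
    intro n
    have hpf : (Function.support fun m => u m (seq n)).Finite :=
      (hlf.point_finite (seq n)).subset fun m hm => husupp m hm
    have hle := single_le_finsum n hpf (fun m => hunn m (seq n))
    have h0 : u n (seq n) = (n : ℝ) + 1 := by
      simp only [hudef, hg0 n]
      norm_num
    rw [h0] at hle
    exact hle
  set h : X → ℝ := fun x => (1 + s x)⁻¹ with hhdef
  have hhpos : ∀ x, 0 < h x := fun x => inv_pos.mpr (by linarith [hsnn x])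
  have hhle : ∀ x, h x ≤ 1 := by
    intro x
    have h1 : (1 : ℝ) ≤ 1 + s x := by linarith [hsnn x]
    have := aux_inv_le_inv one_pos h1
    rwa [inv_one] at this
  have hhc : Continuous h :=
    (continuous_const.add hsc).inv₀ fun x => by simp only [Pi.add_apply]; linarith [hsnn x]
  set f0 : X → ↥(Icc (0 : ℝ) 1) := fun x => ⟨h x, (hhpos x).le, hhle x⟩ with hf0def
  have hf0c : Continuous f0 := hhc.subtype_mk _
  set F : StoneCech X → ℝ := fun p => ((stoneCechExtend hf0c p : ↥(Icc (0 : ℝ) 1)) : ℝ)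
    with hFdef
  have hFc : Continuous F := continuous_subtype_val.comp (continuous_stoneCechExtend hf0c)
  have hFunit : ∀ x, F (stoneCechUnit x) = h x := by
    intro x
    have h1 := congrFun (stoneCechExtend_extends hf0c) x
    simp only [Function.comp_apply] at h1
    simp only [hFdef, h1, hf0def]
  have hCmem : {p : StoneCech X | F p ≠ 0} ∈ {C : Set (StoneCech X) |
      (∃ g : StoneCech X → ℝ, Continuous g ∧ C = {p | g p ≠ 0}) ∧
        Set.range (stoneCechUnit : X → StoneCech X) ⊆ C} := by
    refine ⟨⟨F, hFc, rfl⟩, ?_⟩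
    rintro _ ⟨x, rfl⟩
    simp only [mem_setOf_eq, hFunit]
    exact (hhpos x).ne'
  have hups : upsilonSet X ⊆ {p : StoneCech X | F p ≠ 0} := sInter_subset_of_mem hCmem
  have hKcne : (closure (stoneCechUnit '' W)).Nonempty :=
    ⟨stoneCechUnit x0, subset_closure (mem_image_of_mem _ hx0W)⟩
  have hKcc : IsCompact (closure (stoneCechUnit '' W)) := isClosed_closure.isCompact
  obtain ⟨p, hpK, hpmin⟩ := hKcc.exists_isMinOn hKcne hFc.continuousOn
  have hFnn : 0 ≤ F p := (stoneCechExtend hf0c p).2.1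
  have hple : ∀ n : ℕ, F p ≤ ((n : ℝ) + 2)⁻¹ := by
    intro n
    have h1 : F p ≤ F (stoneCechUnit (seq n)) :=
      (isMinOn_iff.mp hpmin) _ (subset_closure (mem_image_of_mem _ (hseqW n)))
    rw [hFunit] at h1
    refine h1.trans ?_
    have h2 : ((n : ℝ) + 2) ≤ 1 + s (seq n) := by linarith [hsbig n]
    exact aux_inv_le_inv (by positivity) h2
  have hFp0 : F p = 0 := by
    by_contra hne0
    have hpos : 0 < F p := lt_of_le_of_ne hFnn (Ne.symm hne0)
    obtain ⟨n, hn⟩ := exists_nat_gt ((F p)⁻¹)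
    have h3 : (F p)⁻¹ < (n : ℝ) + 2 := by linarith
    have h4 := aux_inv_lt_inv (inv_pos.mpr hpos) h3
    rw [inv_inv] at h4
    exact absurd (hple n) (not_le.mpr h4)
  exact hups (hcl hpK) hFp0

end Aux

/-- A Tychonoff space `X` is connected modulo pseudocompactness (i.e., modulo the ideal
`𝓤_X` generated by the open subsets with pseudocompact closure) iff `cl_{βX}(βX \ υX)`
is preconnected. -/
theorem connectedMod_pseudocompact_iff {X : Type*} [TopologicalSpace X] [T35Space X] :
    ConnectedMod X (GenIdeal {U : Set X | IsOpen U ∧ IsPseudocompactSet (closure U)}) ↔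
      IsPreconnected (closure ((upsilonSet X)ᶜ)) := by
  constructor
  · -- ConnectedMod → IsPreconnected, by contraposition
    intro hcm
    by_contra hnpc
    apply hcm
    unfold IsPreconnected at hnpc
    push_neg at hnpc
    obtain ⟨u, v, hu, hv, hcov, hneu, hnev, hempty⟩ := hnpc
    have hdisj3 : ∀ p, p ∈ closure ((upsilonSet X)ᶜ) → p ∈ u → p ∈ v → False :=
      fun p h1 h2 h3 => Set.eq_empty_iff_forall_notMem.mp hempty p ⟨h1, h2, h3⟩
    set A : Set (StoneCech X) := closure ((upsilonSet X)ᶜ) ∩ vᶜ with hAdef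
    set B : Set (StoneCech X) := closure ((upsilonSet X)ᶜ) ∩ uᶜ with hBdef
    have hAc : IsClosed A := isClosed_closure.inter (isClosed_compl_iff.mpr hv)
    have hBc : IsClosed B := isClosed_closure.inter (isClosed_compl_iff.mpr hu)
    obtain ⟨a, haK, hau⟩ := hneu
    obtain ⟨b, hbK, hbv⟩ := hnev
    have haA : a ∈ A := ⟨haK, fun hav => hdisj3 a haK hau hav⟩
    have hbB : b ∈ B := ⟨hbK, fun hbu => hdisj3 b hbK hbu hbv⟩
    have hdisjAB : Disjoint A B := Set.disjoint_left.mpr fun p hpA hpB =>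
      (hcov hpA.1).elim (fun h => hpB.2 h) (fun h => hpA.2 h)
    have hABK : A ∪ B = closure ((upsilonSet X)ᶜ) := by
      apply Set.Subset.antisymm
      · exact Set.union_subset (fun p hp => hp.1) (fun p hp => hp.1)
      · intro p hp
        rcases hcov hp with h | h
        · exact Or.inl ⟨hp, fun hpv => hdisj3 p hp h hpv⟩
        · exact Or.inr ⟨hp, fun hpu => hdisj3 p hp hpu h⟩
    obtain ⟨H, hH0, hH1, hHmem⟩ := exists_continuous_zero_one_of_isClosed hAc hBc hdisjAB
    refine ⟨fun x => min 1 (max 0 (4 * H (stoneCechUnit x) - 1)), ?_, ?_, ?_, ?_, ?_⟩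
    · exact continuous_const.min (continuous_const.max ((continuous_const.mul
        ((map_continuous H).comp continuous_stoneCechUnit)).sub continuous_const))
    · intro x
      exact ⟨le_min zero_le_one (le_max_left _ _), min_le_left _ _⟩
    · -- f⁻¹(0) ∉ 𝓤
      intro hmem
      have hcl := ideal_closure_subset_upsilon hmem
      have hHa : H a = 0 := hH0 haA
      have hOo : IsOpen ((⇑H) ⁻¹' (Iio (4⁻¹ : ℝ))) := isOpen_Iio.preimage (map_continuous H)
      have haO : a ∈ (⇑H) ⁻¹' (Iio (4⁻¹ : ℝ)) := by
        simp only [mem_preimage, mem_Iio, hHa]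
        norm_num
      obtain ⟨p, hpO, hpu⟩ := mem_closure_iff.mp haK _ hOo haO
      have hsub : stoneCechUnit ⁻¹' ((⇑H) ⁻¹' (Iio (4⁻¹ : ℝ))) ⊆
          (fun x => min 1 (max 0 (4 * H (stoneCechUnit x) - 1))) ⁻¹' {0} := by
        intro x hx
        have hlt : H (stoneCechUnit x) < 4⁻¹ := hx
        have h4 : 4 * H (stoneCechUnit x) - 1 ≤ 0 := by linarith
        simp only [mem_preimage, mem_singleton_iff]
        rw [max_eq_left h4, min_eq_right zero_le_one]
      have hpυ : p ∈ upsilonSet X :=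
        hcl (closure_mono (image_mono hsub) (open_subset_closure_image_preimage hOo hpO))
      exact hpu hpυ
    · -- f⁻¹(1) ∉ 𝓤
      intro hmem
      have hcl := ideal_closure_subset_upsilon hmem
      have hHb : H b = 1 := hH1 hbB
      have hOo : IsOpen ((⇑H) ⁻¹' (Ioi (2⁻¹ : ℝ))) := isOpen_Ioi.preimage (map_continuous H)
      have hbO : b ∈ (⇑H) ⁻¹' (Ioi (2⁻¹ : ℝ)) := by
        simp only [mem_preimage, mem_Ioi, hHb]
        norm_num
      obtain ⟨p, hpO, hpu⟩ := mem_closure_iff.mp hbK _ hOo hbO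
      have hsub : stoneCechUnit ⁻¹' ((⇑H) ⁻¹' (Ioi (2⁻¹ : ℝ))) ⊆
          (fun x => min 1 (max 0 (4 * H (stoneCechUnit x) - 1))) ⁻¹' {1} := by
        intro x hx
        have hgt : (2⁻¹ : ℝ) < H (stoneCechUnit x) := hx
        have h4 : (1 : ℝ) ≤ 4 * H (stoneCechUnit x) - 1 := by linarith
        simp only [mem_preimage, mem_singleton_iff]
        rw [min_eq_left (h4.trans (le_max_right 0 _))]
      have hpυ : p ∈ upsilonSet X :=
        hcl (closure_mono (image_mono hsub) (open_subset_closure_image_preimage hOo hpO))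
      exact hpu hpυ
    · -- middle set ∈ 𝓤
      have hWmo : IsOpen (stoneCechUnit ⁻¹' ((⇑H) ⁻¹' (Ioo (4⁻¹ : ℝ) (2⁻¹ : ℝ)))) :=
        (isOpen_Ioo.preimage (map_continuous H)).preimage continuous_stoneCechUnit
      have hWmcl : closure (stoneCechUnit ''
          (stoneCechUnit ⁻¹' ((⇑H) ⁻¹' (Ioo (4⁻¹ : ℝ) (2⁻¹ : ℝ))))) ⊆ upsilonSet X := by
        have h1 : stoneCechUnit '' (stoneCechUnit ⁻¹' ((⇑H) ⁻¹' (Ioo (4⁻¹ : ℝ) (2⁻¹ : ℝ)))) ⊆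
            (⇑H) ⁻¹' (Icc (4⁻¹ : ℝ) (2⁻¹ : ℝ)) := by
          rintro _ ⟨x, hx, rfl⟩
          exact ⟨le_of_lt hx.1, le_of_lt hx.2⟩
        have h2 : IsClosed ((⇑H) ⁻¹' (Icc (4⁻¹ : ℝ) (2⁻¹ : ℝ))) :=
          isClosed_Icc.preimage (map_continuous H)
        refine (closure_minimal h1 h2).trans ?_
        intro p hp
        by_contra hpu
        have hpK : p ∈ closure ((upsilonSet X)ᶜ) := subset_closure hpu
        have hpAB : p ∈ A ∪ B := hABK ▸ hpK
        rcases hpAB with hA' | hB'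
        · have h0 : H p = 0 := hH0 hA'
          have h1' : (4⁻¹ : ℝ) ≤ H p := hp.1
          rw [h0] at h1'
          norm_num at h1'
        · have h0 : H p = 1 := hH1 hB'
          have h1' : H p ≤ (2⁻¹ : ℝ) := hp.2
          rw [h0] at h1'
          norm_num at h1'
      have hWmp := pseudocompact_of_closure_image_subset_upsilon hWmo hWmcl
      refine ⟨{stoneCechUnit ⁻¹' ((⇑H) ⁻¹' (Ioo (4⁻¹ : ℝ) (2⁻¹ : ℝ)))},
        singleton_subset_iff.mpr ⟨hWmo, hWmp⟩, finite_singleton _, ?_⟩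
      rw [sUnion_singleton]
      intro x hx
      simp only [mem_compl_iff, mem_union, mem_preimage, mem_singleton_iff] at hx
      push_neg at hx
      obtain ⟨h0, h1⟩ := hx
      have hlt1 : (4⁻¹ : ℝ) < H (stoneCechUnit x) := by
        by_contra hle
        push_neg at hle
        apply h0
        have h4 : 4 * H (stoneCechUnit x) - 1 ≤ 0 := by linarith
        rw [max_eq_left h4, min_eq_right zero_le_one]
      have hlt2 : H (stoneCechUnit x) < (2⁻¹ : ℝ) := by
        by_contra hle
        push_neg at hle
        apply h1
        have h4 : (1 : ℝ) ≤ 4 * H (stoneCechUnit x) - 1 := by linarith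
        rw [min_eq_left (h4.trans (le_max_right 0 _))]
      exact ⟨hlt1, hlt2⟩
  · -- IsPreconnected → ConnectedMod
    intro hpc
    rintro ⟨f, hfc, hfI, hf0, hf1, hfS⟩
    have hf0c : Continuous (fun x => (⟨f x, hfI x⟩ : ↥(Icc (0 : ℝ) 1))) := hfc.subtype_mk _
    set F : StoneCech X → ℝ := fun p => ((stoneCechExtend hf0c p : ↥(Icc (0 : ℝ) 1)) : ℝ)
      with hFdef
    have hFc : Continuous F := continuous_subtype_val.comp (continuous_stoneCechExtend hf0c)
    have hFunit : ∀ x, F (stoneCechUnit x) = f x := by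
      intro x
      have h1 := congrFun (stoneCechExtend_extends hf0c) x
      simp only [Function.comp_apply] at h1
      simp only [hFdef, h1]
    have hFmem : ∀ p, F p ∈ Icc (0 : ℝ) 1 := fun p => (stoneCechExtend hf0c p).2
    have hclS := ideal_closure_subset_upsilon hfS
    have hOsub : F ⁻¹' (Ioo (0 : ℝ) 1) ⊆ upsilonSet X := by
      have hOo : IsOpen (F ⁻¹' Ioo (0 : ℝ) 1) := isOpen_Ioo.preimage hFc
      have hsub : stoneCechUnit ⁻¹' (F ⁻¹' Ioo (0 : ℝ) 1) ⊆ (f ⁻¹' {0} ∪ f ⁻¹' {1})ᶜ := by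
        intro x hx
        have h1 : f x ∈ Ioo (0 : ℝ) 1 := by rw [← hFunit x]; exact hx
        simp only [mem_compl_iff, mem_union, mem_preimage, mem_singleton_iff]
        push_neg
        exact ⟨fun h => by rw [h] at h1; exact lt_irrefl _ h1.1,
          fun h => by rw [h] at h1; exact lt_irrefl _ h1.2⟩
      intro p hp
      exact hclS (closure_mono (image_mono hsub) (open_subset_closure_image_preimage hOo hp))
    have hK01 : ∀ p ∈ closure ((upsilonSet X)ᶜ), F p = 0 ∨ F p = 1 := by
      intro p hp
      have hcl2 : closure ((upsilonSet X)ᶜ) ⊆ (F ⁻¹' Ioo (0 : ℝ) 1)ᶜ :=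
        closure_minimal (compl_subset_compl.mpr hOsub)
          (isClosed_compl_iff.mpr (isOpen_Ioo.preimage hFc))
      have hnot : F p ∉ Ioo (0 : ℝ) 1 := hcl2 hp
      rcases (hFmem p).1.eq_or_lt with h | h
      · exact Or.inl h.symm
      · rcases (hFmem p).2.lt_or_eq with h2 | h2
        · exact absurd ⟨h, h2⟩ hnot
        · exact Or.inr h2
    have hne1 : (closure ((upsilonSet X)ᶜ) ∩ F ⁻¹' (Iio (2⁻¹ : ℝ))).Nonempty := by
      by_contra hno
      rw [Set.not_nonempty_iff_eq_empty] at hno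
      have hW : closure (stoneCechUnit '' (f ⁻¹' (Iio (2⁻¹ : ℝ)))) ⊆ upsilonSet X := by
        have h1 : stoneCechUnit '' (f ⁻¹' Iio (2⁻¹ : ℝ)) ⊆ F ⁻¹' (Iic (2⁻¹ : ℝ)) := by
          rintro _ ⟨x, hx, rfl⟩
          simp only [mem_preimage, mem_Iic, hFunit]
          exact le_of_lt hx
        refine (closure_minimal h1 (isClosed_Iic.preimage hFc)).trans ?_
        intro p hp
        by_contra hpu
        have hpK : p ∈ closure ((upsilonSet X)ᶜ) := subset_closure hpu
        rcases hK01 p hpK with h | h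
        · refine Set.eq_empty_iff_forall_notMem.mp hno p ⟨hpK, ?_⟩
          simp only [mem_preimage, mem_Iio, h]
          norm_num
        · have h2 : F p ≤ (2⁻¹ : ℝ) := hp
          rw [h] at h2
          norm_num at h2
      have hWp := pseudocompact_of_closure_image_subset_upsilon (isOpen_Iio.preimage hfc) hW
      apply hf0
      refine ⟨{f ⁻¹' Iio (2⁻¹ : ℝ)},
        singleton_subset_iff.mpr ⟨isOpen_Iio.preimage hfc, hWp⟩, finite_singleton _, ?_⟩
      rw [sUnion_singleton]
      intro x hx
      simp only [mem_preimage, mem_singleton_iff] at hx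
      simp only [mem_preimage, mem_Iio, hx]
      norm_num
    have hne2 : (closure ((upsilonSet X)ᶜ) ∩ F ⁻¹' (Ioi (2⁻¹ : ℝ))).Nonempty := by
      by_contra hno
      rw [Set.not_nonempty_iff_eq_empty] at hno
      have hW : closure (stoneCechUnit '' (f ⁻¹' (Ioi (2⁻¹ : ℝ)))) ⊆ upsilonSet X := by
        have h1 : stoneCechUnit '' (f ⁻¹' Ioi (2⁻¹ : ℝ)) ⊆ F ⁻¹' (Ici (2⁻¹ : ℝ)) := by
          rintro _ ⟨x, hx, rfl⟩
          simp only [mem_preimage, mem_Ici, hFunit]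
          exact le_of_lt hx
        refine (closure_minimal h1 (isClosed_Ici.preimage hFc)).trans ?_
        intro p hp
        by_contra hpu
        have hpK : p ∈ closure ((upsilonSet X)ᶜ) := subset_closure hpu
        rcases hK01 p hpK with h | h
        · have h2 : (2⁻¹ : ℝ) ≤ F p := hp
          rw [h] at h2
          norm_num at h2
        · refine Set.eq_empty_iff_forall_notMem.mp hno p ⟨hpK, ?_⟩
          simp only [mem_preimage, mem_Ioi, h]
          norm_num
      have hWp := pseudocompact_of_closure_image_subset_upsilon (isOpen_Ioi.preimage hfc) hW
      apply hf1
      refine ⟨{f ⁻¹' Ioi (2⁻¹ : ℝ)},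
        singleton_subset_iff.mpr ⟨isOpen_Ioi.preimage hfc, hWp⟩, finite_singleton _, ?_⟩
      rw [sUnion_singleton]
      intro x hx
      simp only [mem_preimage, mem_singleton_iff] at hx
      simp only [mem_preimage, mem_Ioi, hx]
      norm_num
    have hcov : closure ((upsilonSet X)ᶜ) ⊆ F ⁻¹' (Iio (2⁻¹ : ℝ)) ∪ F ⁻¹' (Ioi (2⁻¹ : ℝ)) := by
      intro p hp
      rcases hK01 p hp with h | h
      · left
        simp only [mem_preimage, mem_Iio, h]
        norm_num
      · right
        simp only [mem_preimage, mem_Ioi, h]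
        norm_num
    obtain ⟨p, _, hpu, hpv⟩ := hpc _ _ (isOpen_Iio.preimage hFc) (isOpen_Ioi.preimage hFc)
      hcov hne1 hne2
    have h1 : F p < 2⁻¹ := hpu
    have h2 : (2⁻¹ : ℝ) < F p := hpv
    exact lt_asymm h1 h2
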